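/- For the matrix A with rows (-τ, f, 0), (-f, -τ, 0), (-h_x, -h_y, 0) and f² + τ² ≠ 0, the (3,1) entry of e^{At} equals [(-f h_y + h_x τ) e^{-τt} cos(ft) + (-f h_x - h_y τ) e^{-τt} sin(ft) + f h_y - h_x τ]/(f² + τ²) for all real t. -/

import Mathlib

set_option maxHeartbeats 1000000


open Matrix

theorem stmt_4 (τ f hx hy : ℝ) (hfτ : f ^ 2 + τ ^ 2 ≠ 0) :
    ∀ t : ℝ,
      (NormedSpace.exp (t • (!![-τ, f, 0; -f, -τ, 0; -hx, -hy, 0] : Matrix (Fin 3) (Fin 3) ℝ))) 2 0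
        = ((-f * hy + hx * τ) * Real.exp (-τ * t) * Real.cos (f * t)
            + (-f * hx - hy * τ) * Real.exp (-τ * t) * Real.sin (f * t)
            + f * hy - hx * τ) / (f ^ 2 + τ ^ 2) := by
  letI : SeminormedRing (Matrix (Fin 3) (Fin 3) ℝ) := Matrix.linftyOpSemiNormedRing
  letI : NormedRing (Matrix (Fin 3) (Fin 3) ℝ) := Matrix.linftyOpNormedRing
  letI : NormedAlgebra ℝ (Matrix (Fin 3) (Fin 3) ℝ) := Matrix.linftyOpNormedAlgebra
  letI : NormedAlgebra ℚ (Matrix (Fin 3) (Fin 3) ℝ) := Matrix.linftyOpNormedAlgebra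
  intro t
  set Δ : ℝ := f ^ 2 + τ ^ 2 with hΔ
  set A : Matrix (Fin 3) (Fin 3) ℝ := !![-τ, f, 0; -f, -τ, 0; -hx, -hy, 0] with hA
  set a : ℝ := -f * hy + hx * τ with ha
  set b : ℝ := -f * hx - hy * τ with hb
  set c : ℝ := f * hx + τ * hy with hc
  set d : ℝ := τ * hx - f * hy with hd
  set C : Matrix (Fin 3) (Fin 3) ℝ := !![1,0,0; 0,1,0; a/Δ, c/Δ, 0] with hC
  set S : Matrix (Fin 3) (Fin 3) ℝ := !![0,1,0; -1,0,0; b/Δ, d/Δ, 0] with hS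
  set K : Matrix (Fin 3) (Fin 3) ℝ := !![0,0,0; 0,0,0; -a/Δ, -c/Δ, 1] with hK
  set u : ℝ → ℝ := fun s => Real.exp (-τ * s) * Real.cos (f * s) with hu
  set v : ℝ → ℝ := fun s => Real.exp (-τ * s) * Real.sin (f * s) with hv
  set E : ℝ → Matrix (Fin 3) (Fin 3) ℝ := fun s => u s • C + v s • S + K with hE
  have hud : ∀ s, HasDerivAt u (-τ * u s - f * v s) s := by
    intro s
    have h1 : HasDerivAt (fun s : ℝ => Real.exp (-τ * s)) (-τ * Real.exp (-τ * s)) s := by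
      simpa [mul_comm] using (((hasDerivAt_id s).const_mul (-τ)).exp)
    have h2 : HasDerivAt (fun s : ℝ => Real.cos (f * s)) (-Real.sin (f * s) * f) s := by
      simpa [mul_comm] using (((hasDerivAt_id s).const_mul f).cos)
    have := h1.mul h2
    convert this using 1
    · rfl
    · rfl
    · rfl
    simp [hu, hv]; ring
  have hvd : ∀ s, HasDerivAt v (f * u s - τ * v s) s := by
    intro s
    have h1 : HasDerivAt (fun s : ℝ => Real.exp (-τ * s)) (-τ * Real.exp (-τ * s)) s := by
      simpa [mul_comm] using (((hasDerivAt_id s).const_mul (-τ)).exp)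
    have h2 : HasDerivAt (fun s : ℝ => Real.sin (f * s)) (Real.cos (f * s) * f) s := by
      simpa [mul_comm] using (((hasDerivAt_id s).const_mul f).sin)
    have := h1.mul h2
    convert this using 1
    · rfl
    · rfl
    · rfl
    simp [hu, hv]; ring
  have hEd : ∀ s, HasDerivAt E ((-τ * u s - f * v s) • C + (f * u s - τ * v s) • S) s := by
    intro s
    exact (((hud s).smul_const C).add ((hvd s).smul_const S)).add_const K
  have key : ∀ s, A * E s = (-τ * u s - f * v s) • C + (f * u s - τ * v s) • S := by
    intro s
    ext i j
    fin_cases i <;> fin_cases j <;>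
        simp [hE, hA, hC, hS, hK, Matrix.mul_apply, Fin.sum_univ_succ, Matrix.vecHead, Matrix.vecTail] <;>
      (try field_simp) <;> ring
  have hgd : ∀ s, HasDerivAt (fun s : ℝ => NormedSpace.exp ((-s) • A) * E s) 0 s := by
    intro s
    have h1 : HasDerivAt (fun s : ℝ => NormedSpace.exp ((-s) • A))
        ((-1 : ℝ) • (A * NormedSpace.exp ((-s) • A))) s :=
      (hasDerivAt_exp_smul_const' (𝕂 := ℝ) A (-s)).scomp s (hasDerivAt_neg s)
    have h2 := h1.mul (hEd s)
    rw [← key s] at h2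
    convert h2 using 1
    · rfl
    · rfl
    · rfl
    · rfl
    have hcomm : NormedSpace.exp ((-s) • A) * A = A * NormedSpace.exp ((-s) • A) :=
      (((Commute.refl A).smul_left (-s)).exp_left)
    rw [← mul_assoc, hcomm]
    simp [mul_assoc]
  have hE0 : E 0 = 1 := by
    rw [Matrix.one_fin_three]
    ext i j
    fin_cases i <;> fin_cases j <;>
        simp [hE, hC, hS, hK, hu, hv, Matrix.vecHead, Matrix.vecTail] <;> ring
  have hconst : ∀ s : ℝ, NormedSpace.exp ((-s) • A) * E s = 1 := by
    intro s
    have h := is_const_of_deriv_eq_zero (f := fun s : ℝ => NormedSpace.exp ((-s) • A) * E s)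
      (fun x => (hgd x).differentiableAt) (fun x => (hgd x).deriv) s 0
    rw [h]
    simp [hE0]
  have hinv : NormedSpace.exp (t • A) * NormedSpace.exp ((-t) • A) = 1 := by
    erw [← NormedSpace.exp_add_of_commute (((Commute.refl A).smul_right (-t)).smul_left t)]
    rw [← add_smul]
    simp
  have hEeq : E t = NormedSpace.exp (t • A) := by
    have h := congrArg (fun M => NormedSpace.exp (t • A) * M) (hconst t)
    simp only [← mul_assoc, hinv, one_mul, mul_one] at h
    exact h
  rw [← hEeq]
  simp [hE, hC, hS, hK, hu, hv]
  field_simp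
  ring
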